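/- arXiv:1905.06858 — 2 statements merged into one kernel-verified Lean document; each statement's English description precedes it below -/
import Mathlib

section
/- The Curry–Schoenberg B-spline M_i^{k+1}(x) = ((k+1)/(λ_{i+k+1} - λ_i)) B_i^{k+1}(x) integrates to 1 over ℝ, for any degree k ≥ 0 and strictly increasing knots. -/
open MeasureTheory Set

/-- Normalized B-spline of degree `k` (order `k+1`) with knot sequence `t`,
defined by the Cox–de Boor recursion. -/
noncomputable def Bspline (t : ℤ → ℝ) : ℕ → ℤ → ℝ → ℝ
  | 0, i, x => if x ∈ Set.Ico (t i) (t (i + 1)) then 1 else 0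
  | k + 1, i, x =>
      ((x - t i) / (t (i + (k : ℤ) + 1) - t i)) * Bspline t k i x +
        ((t (i + (k : ℤ) + 2) - x) / (t (i + (k : ℤ) + 2) - t (i + 1))) *
          Bspline t k (i + 1) x

noncomputable def Hh (t : ℤ → ℝ) : ℕ → ℤ → ℕ → ℝ
  | 0, _, _ => 1
  | m + 1, i, 0 => t i ^ (m + 1)
  | m + 1, i, n + 1 => Hh t (m + 1) i n + t (i + (n : ℤ) + 1) * Hh t m i (n + 1)

theorem Hh_peel (t : ℤ → ℝ) : ∀ m n (i : ℤ),
    Hh t (m + 1) i (n + 1) = Hh t (m + 1) (i + 1) n + t i * Hh t m i (n + 1) := by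
  intro m
  induction m with
  | zero =>
    intro n
    induction n with
    | zero => intro i; simp [Hh]; ring
    | succ n ihn =>
      intro i
      have e1 : Hh t 1 i (n + 2) = Hh t 1 i (n + 1) + t (i + (n : ℤ) + 2) := by
        show Hh t 1 i (n + 1 + 1) = _
        rw [Hh]
        have h : i + ((n : ℤ) + 1) + 1 = i + (n : ℤ) + 2 := by ring
        simp [Hh, h]
      have e2 : Hh t 1 (i + 1) (n + 1) = Hh t 1 (i + 1) n + t (i + (n : ℤ) + 2) := by
        rw [Hh]
        have h : i + 1 + (n : ℤ) + 1 = i + (n : ℤ) + 2 := by ring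
        simp [Hh, h]
      rw [e1, e2, ihn i]
      simp [Hh]
      ring
  | succ m ihm =>
    intro n
    induction n with
    | zero =>
      intro i
      have d1 : Hh t (m + 2) i 1 = t i ^ (m + 2) + t (i + 1) * Hh t (m + 1) i 1 := by
        show Hh t (m + 1 + 1) i (0 + 1) = _
        rw [Hh]
        simp [Hh]
      have dR : Hh t (m + 2) (i + 1) 0 = t (i + 1) ^ (m + 2) := by
        show Hh t (m + 1 + 1) (i + 1) 0 = _
        rw [Hh]
      have hL : Hh t (m + 1) i 1 = t i ^ (m + 1) + t (i + 1) * Hh t m i 1 := by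
        show Hh t (m + 1) i (0 + 1) = _
        rw [Hh]
        simp [Hh]
      have d2 : Hh t (m + 1) i 1 = t (i + 1) ^ (m + 1) + t i * Hh t m i 1 := by
        have h := ihm 0 i
        simpa [Hh] using h
      rw [d1, dR]
      linear_combination (t (i + 1)) * d2 - (t i) * hL
    | succ n ihn =>
      intro i
      have defL : Hh t (m + 2) i (n + 2) = Hh t (m + 2) i (n + 1) + t (i + (n : ℤ) + 2) * Hh t (m + 1) i (n + 2) := by
        show Hh t (m + 1 + 1) i (n + 1 + 1) = _
        rw [Hh]
        push_cast
        rw [show i + ((n : ℤ) + 1) + 1 = i + (n : ℤ) + 2 from by ring]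
      have defR : Hh t (m + 2) (i + 1) (n + 1) = Hh t (m + 2) (i + 1) n + t (i + (n : ℤ) + 2) * Hh t (m + 1) (i + 1) (n + 1) := by
        show Hh t (m + 1 + 1) (i + 1) (n + 1) = _
        rw [Hh]
        rw [show i + 1 + (n : ℤ) + 1 = i + (n : ℤ) + 2 from by ring]
      have defM : Hh t (m + 1) i (n + 2) = Hh t (m + 1) i (n + 1) + t (i + (n : ℤ) + 2) * Hh t m i (n + 2) := by
        show Hh t (m + 1) i (n + 1 + 1) = _
        rw [Hh]
        push_cast
        rw [show i + ((n : ℤ) + 1) + 1 = i + (n : ℤ) + 2 from by ring]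
      have pL := ihm (n + 1) i
      have pC := ihn i
      rw [defL, defR, pC]
      have h2 : Hh t (m + 1) (i + 1) (n + 1) = Hh t (m + 1) i (n + 2) - t i * Hh t m i (n + 2) := by
        rw [pL]; ring
      rw [h2, defM]
      ring

theorem Hh_def (t : ℤ → ℝ) (m n : ℕ) (i : ℤ) :
    Hh t (m + 1) i (n + 1) = Hh t (m + 1) i n + t (i + (n : ℤ) + 1) * Hh t m i (n + 1) := by
  rw [Hh]

theorem Hh_A (t : ℤ → ℝ) (m n : ℕ) (i : ℤ) :
    Hh t (m + 1) i n - Hh t (m + 1) (i + 1) n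
      = (t i - t (i + (n : ℤ) + 1)) * Hh t m i (n + 1) := by
  linear_combination Hh_peel t m n i - Hh_def t m n i

theorem Hh_B (t : ℤ → ℝ) (m n : ℕ) (i : ℤ) :
    t (i + (n : ℤ) + 1) * Hh t m (i + 1) n - t i * Hh t m i n
      = (t (i + (n : ℤ) + 1) - t i) * Hh t m i (n + 1) := by
  cases m with
  | zero => simp [Hh]
  | succ m => linear_combination (t i) * Hh_def t m n i - (t (i + (n : ℤ) + 1)) * Hh_peel t m n i

noncomputable def cmk (m k : ℕ) : ℝ :=
  (m.factorial * k.factorial : ℝ) / (m + k + 1).factorial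

theorem cmk_sub (m k : ℕ) : cmk m k - cmk (m + 1) k = cmk m (k + 1) := by
  unfold cmk
  rw [show (m + 1) + k + 1 = (m + k + 1) + 1 from by omega,
      show m + (k + 1) + 1 = (m + k + 1) + 1 from by omega,
      Nat.factorial_succ (m + k + 1), Nat.factorial_succ m, Nat.factorial_succ k]
  have hF : ((m + k + 1).factorial : ℝ) ≠ 0 := by positivity
  have hS : ((m : ℝ) + (k : ℝ) + 2) ≠ 0 := by positivity
  push_cast
  field_simp
  ring

theorem Bspline_zero_eq (t : ℤ → ℝ) (i : ℤ) (m : ℕ) :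
    (fun x : ℝ => x ^ m * Bspline t 0 i x)
      = (Set.Ico (t i) (t (i + 1))).indicator (fun x => x ^ m) := by
  funext x
  simp [Bspline, Set.indicator_apply, mul_ite]

theorem Bspline_succ_eq (t : ℤ → ℝ) (k : ℕ) (i : ℤ) (m : ℕ) :
    (fun x : ℝ => x ^ m * Bspline t (k + 1) i x)
      = fun x : ℝ =>
        ((1 / (t (i + (k : ℤ) + 1) - t i)) * (x ^ (m + 1) * Bspline t k i x)
          + ((-(t i)) / (t (i + (k : ℤ) + 1) - t i)) * (x ^ m * Bspline t k i x))
        + ((t (i + (k : ℤ) + 2) / (t (i + (k : ℤ) + 2) - t (i + 1))) * (x ^ m * Bspline t k (i + 1) x)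
          + ((-1 : ℝ) / (t (i + (k : ℤ) + 2) - t (i + 1))) * (x ^ (m + 1) * Bspline t k (i + 1) x)) := by
  funext x
  rw [Bspline]
  ring

theorem Bspline_integrable (t : ℤ → ℝ) :
    ∀ (k : ℕ) (i : ℤ) (m : ℕ), Integrable (fun x : ℝ => x ^ m * Bspline t k i x) := by
  intro k
  induction k with
  | zero =>
    intro i m
    rw [Bspline_zero_eq]
    rw [integrable_indicator_iff measurableSet_Ico]
    exact ((continuous_pow m).integrableOn_Icc).mono_set Set.Ico_subset_Icc_self
  | succ k ih =>
    intro i m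
    rw [Bspline_succ_eq]
    exact (((ih i (m + 1)).const_mul _).add ((ih i m).const_mul _)).add
      (((ih (i + 1) m).const_mul _).add (((ih (i + 1) (m + 1)).const_mul _)))

theorem Bspline_integral (t : ℤ → ℝ) (ht : StrictMono t) :
    ∀ (k m : ℕ) (i : ℤ),
      ∫ x : ℝ, x ^ m * Bspline t k i x
        = cmk m k * (t (i + (k : ℤ) + 1) - t i) * Hh t m i (k + 1) := by
  intro k
  induction k with
  | zero =>
    intro m i
    rw [Bspline_zero_eq, integral_indicator measurableSet_Ico,
      integral_Ico_eq_integral_Ioo, ← integral_Ioc_eq_integral_Ioo,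
      ← intervalIntegral.integral_of_le (ht (by omega : i < i + 1)).le,
      integral_pow]
    have hpow : (t (i + 1) - t i) * Hh t m i 1 = t (i + 1) ^ (m + 1) - t i ^ (m + 1) := by
      have h := Hh_A t m 0 i
      simp only [Hh] at h ⊢
      have h0 : i + ((0 : ℕ) : ℤ) + 1 = i + 1 := by push_cast; ring
      rw [h0] at h
      linarith
    have hc : cmk m 0 = 1 / ((m : ℝ) + 1) := by
      unfold cmk
      rw [Nat.factorial_succ]
      have : (m.factorial : ℝ) ≠ 0 := by positivity
      push_cast
      field_simp
      ring
    push_cast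
    rw [hc]
    have hm : ((m : ℝ) + 1) ≠ 0 := by positivity
    field_simp
    simp only [Nat.cast_zero, add_zero]
    linear_combination -hpow
  | succ k ih =>
    intro m i
    have hdA : t (i + (k : ℤ) + 1) - t i ≠ 0 :=
      sub_ne_zero.mpr (ne_of_gt (ht (by omega : i < i + (k : ℤ) + 1)))
    have hdB : t (i + (k : ℤ) + 2) - t (i + 1) ≠ 0 :=
      sub_ne_zero.mpr (ne_of_gt (ht (by omega : i + 1 < i + (k : ℤ) + 2)))
    have I1 := (Bspline_integrable t k i (m + 1)).const_mul
      (1 / (t (i + (k : ℤ) + 1) - t i))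
    have I2 := (Bspline_integrable t k i m).const_mul
      ((-(t i)) / (t (i + (k : ℤ) + 1) - t i))
    have I3 := (Bspline_integrable t k (i + 1) m).const_mul
      (t (i + (k : ℤ) + 2) / (t (i + (k : ℤ) + 2) - t (i + 1)))
    have I4 := (Bspline_integrable t k (i + 1) (m + 1)).const_mul
      ((-1 : ℝ) / (t (i + (k : ℤ) + 2) - t (i + 1)))
    have J12 : Integrable (fun x : ℝ =>
        1 / (t (i + (k : ℤ) + 1) - t i) * (x ^ (m + 1) * Bspline t k i x)
          + (-(t i)) / (t (i + (k : ℤ) + 1) - t i) * (x ^ m * Bspline t k i x)) := I1.add I2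
    have J34 : Integrable (fun x : ℝ =>
        t (i + (k : ℤ) + 2) / (t (i + (k : ℤ) + 2) - t (i + 1)) * (x ^ m * Bspline t k (i + 1) x)
          + (-1 : ℝ) / (t (i + (k : ℤ) + 2) - t (i + 1)) * (x ^ (m + 1) * Bspline t k (i + 1) x)) := I3.add I4
    rw [Bspline_succ_eq, integral_add J12 J34, integral_add I1 I2,
      integral_add I3 I4, integral_const_mul, integral_const_mul, integral_const_mul,
      integral_const_mul]
    have ih1 := ih (m + 1) i
    have ih2 := ih m i
    have ih3 := ih m (i + 1)
    have ih4 := ih (m + 1) (i + 1)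
    rw [show i + 1 + (k : ℤ) + 1 = i + (k : ℤ) + 2 from by ring] at ih3 ih4
    rw [ih1, ih2, ih3, ih4]
    have hA2 := Hh_A t m (k + 1) i
    have hB2 := Hh_B t m (k + 1) i
    push_cast at hA2 hB2 ⊢
    rw [show i + ((k : ℤ) + 1) + 1 = i + (k : ℤ) + 2 from by ring] at hA2 hB2 ⊢
    have hc2 := cmk_sub m k
    have e1 : ∀ c H : ℝ, 1 / (t (i + (k : ℤ) + 1) - t i) * (c * (t (i + (k : ℤ) + 1) - t i) * H)
        = c * H := by intro c H; field_simp
    have e2 : ∀ c H : ℝ, (-(t i)) / (t (i + (k : ℤ) + 1) - t i) * (c * (t (i + (k : ℤ) + 1) - t i) * H)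
        = -(t i * (c * H)) := by intro c H; field_simp
    have e3 : ∀ c H : ℝ, t (i + (k : ℤ) + 2) / (t (i + (k : ℤ) + 2) - t (i + 1)) * (c * (t (i + (k : ℤ) + 2) - t (i + 1)) * H)
        = t (i + (k : ℤ) + 2) * (c * H) := by intro c H; field_simp
    have e4 : ∀ c H : ℝ, (-1 : ℝ) / (t (i + (k : ℤ) + 2) - t (i + 1)) * (c * (t (i + (k : ℤ) + 2) - t (i + 1)) * H)
        = -(c * H) := by intro c H; field_simp
    rw [e1, e2, e3, e4]
    linear_combination (cmk (m + 1) k) * hA2 + (cmk m k) * hB2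
      + (t (i + (k : ℤ) + 2) - t i) * Hh t m i (k + 1 + 1) * hc2

/-- The Curry–Schoenberg B-spline M_i^{k+1} = ((k+1)/(λ_{i+k+1}-λ_i))·B_i^{k+1}
integrates to 1 over ℝ. -/
theorem CurrySchoenberg_integral_one (t : ℤ → ℝ) (ht : StrictMono t) (k : ℕ) (i : ℤ) :
    ∫ x : ℝ, ((k + 1 : ℝ) / (t (i + (k : ℤ) + 1) - t i)) * Bspline t k i x = 1 := by
  rw [integral_const_mul]
  have h0 : ∫ x : ℝ, Bspline t k i x
      = cmk 0 k * (t (i + (k : ℤ) + 1) - t i) * Hh t 0 i (k + 1) := by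
    rw [← Bspline_integral t ht k 0 i]
    congr 1
    funext x
    simp
  have h1 : Hh t 0 i (k + 1) = 1 := by simp [Hh]
  have hck : cmk 0 k = 1 / ((k : ℝ) + 1) := by
    unfold cmk
    rw [show 0 + k + 1 = k + 1 from by omega, Nat.factorial_succ]
    have : (k.factorial : ℝ) ≠ 0 := by positivity
    push_cast
    field_simp
    ring
  have hd : t (i + (k : ℤ) + 1) - t i ≠ 0 :=
    sub_ne_zero.mpr (ne_of_gt (ht (by omega : i < i + (k : ℤ) + 1)))
  have hk1 : ((k : ℝ) + 1) ≠ 0 := by positivity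
  rw [h0, h1, hck]
  field_simp
end

section
/- The functions Z_{-k}^{k+1}, ..., Z_{g-1}^{k+1} form a basis of the space Z_k^{Δλ}[a,b] of degree-k splines with zero integral: they are linearly independent elements of Z_k^{Δλ}[a,b], which has dimension g+k, so they span it. -/
/-- The ZB-splines Z_i = M_i - M_{i+1} form a basis of the space of splines with zero
integral: they are linearly independent and span the kernel of the integral functional φ,
where the M_i form a basis of the (g+k+1)-dimensional spline space with φ(M_i) = 1. -/
theorem ZBsplines_basis {V : Type*} [AddCommGroup V] [Module ℝ V]
    [FiniteDimensional ℝ V] (g k : ℕ)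
    (hdim : Module.finrank ℝ V = g + k + 1)
    (M : Fin (g + k + 1) → V) (hM : LinearIndependent ℝ M)
    (φ : V →ₗ[ℝ] ℝ) (hφ : ∀ i, φ (M i) = 1) :
    LinearIndependent ℝ (fun i : Fin (g + k) => M i.castSucc - M i.succ) ∧
      Submodule.span ℝ (Set.range fun i : Fin (g + k) => M i.castSucc - M i.succ) =
        LinearMap.ker φ := by
  have hZ : LinearIndependent ℝ (fun i : Fin (g + k) => M i.castSucc - M i.succ) := by
    rw [Fintype.linearIndependent_iff]
    intro c hc i
    have key : ∑ j : Fin (g + k + 1), ((if h : (j:ℕ) < (g + k) then c ⟨(j:ℕ), h⟩ else 0)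
        - (if h : 0 < (j:ℕ) then c ⟨(j:ℕ)-1, by have := j.isLt; omega⟩ else 0)) • M j = 0 := by
      have e1 : ∑ j : Fin (g + k + 1), (if h : (j:ℕ) < (g + k) then c ⟨(j:ℕ), h⟩ else 0) • M j
          = ∑ i : Fin (g + k), c i • M i.castSucc := by
        rw [Fin.sum_univ_castSucc]
        simp
      have e2 : ∑ j : Fin (g + k + 1), (if h : 0 < (j:ℕ) then c ⟨(j:ℕ)-1, by have := j.isLt; omega⟩ else 0) • M j
          = ∑ i : Fin (g + k), c i • M i.succ := by
        rw [Fin.sum_univ_succ]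
        simp
      simp only [sub_smul]
      rw [Finset.sum_sub_distrib, e1, e2, ← Finset.sum_sub_distrib]
      simp only [← smul_sub]
      exact hc
    have hd := Fintype.linearIndependent_iff.mp hM _ key
    have hzero : ∀ m : ℕ, ∀ hm : m < g + k, c ⟨m, hm⟩ = 0 := by
      intro m
      induction m with
      | zero =>
        intro hm
        have h0 := hd ⟨0, by omega⟩
        simpa [hm] using h0
      | succ p ih =>
        intro hm
        have h1 := hd ⟨p+1, by omega⟩
        simp only [Fin.val_mk, Nat.add_sub_cancel, Nat.succ_pos, dif_pos, hm] at h1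
        rw [ih (by omega)] at h1
        simpa using h1
    simpa using hzero i.1 i.2
  refine ⟨hZ, ?_⟩
  have hle : Submodule.span ℝ (Set.range fun i : Fin (g + k) => M i.castSucc - M i.succ)
      ≤ LinearMap.ker φ := by
    rw [Submodule.span_le]
    rintro x ⟨i, rfl⟩
    simp [LinearMap.mem_ker, hφ]
  have hsurj : Function.Surjective φ := fun r => ⟨r • M 0, by simp [hφ]⟩
  have hker : Module.finrank ℝ (LinearMap.ker φ) = (g + k) := by
    have h1 := LinearMap.finrank_range_add_finrank_ker φ
    have h2 : Module.finrank ℝ (LinearMap.range φ) = 1 := by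
      rw [LinearMap.range_eq_top.mpr hsurj]
      simp
    omega
  have hspan : Module.finrank ℝ
      (Submodule.span ℝ (Set.range fun i : Fin (g + k) => M i.castSucc - M i.succ)) = (g + k) := by
    rw [finrank_span_eq_card hZ]
    simp
  exact Submodule.eq_of_le_of_finrank_le hle (by rw [hker, hspan])
end
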